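/- Let n ≥ 2 and let 0 = x₁ < x₂ < ⋯ < xₙ be real numbers, and set p(x) = ∏_{i=1}^n (x − xᵢ). Let μ* denote the smallest root of the derivative p′(x), and let H = (n−1)/(∑_{i=2}^n 1/xᵢ) be the harmonic mean of x₂, …, xₙ. Then (1/2)·H ≤ (n−1)·μ* ≤ H. -/

import Mathlib

open Polynomial

lemma deriv_finprod {ι : Type*} [DecidableEq ι] (s : Finset ι) (f : ι → ℝ[X]) :
    derivative (∏ i ∈ s, f i) = ∑ i ∈ s, (∏ j ∈ s.erase i, f j) * derivative (f i) := by
  classical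
  induction s using Finset.induction_on with
  | empty => simp
  | insert _ _ hns ih =>
    rename_i a s
    rw [Finset.prod_insert hns, derivative_mul, ih, Finset.sum_insert hns,
      Finset.erase_insert hns]
    congr 1
    · exact mul_comm _ _
    · rw [Finset.mul_sum]
      apply Finset.sum_congr rfl
      intro b hb
      rw [Finset.erase_insert_of_ne (by rintro rfl; exact hns hb),
        Finset.prod_insert (fun h => hns (Finset.mem_of_mem_erase h)), mul_assoc]


/-- **Theorem (smallest critical point vs. harmonic mean).**
Let `0 = x₁ < x₂ < ⋯ < xₙ`, `p(x) = ∏ᵢ (x - xᵢ)`, `μ*` the smallest root of `p'`,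
and `H` the harmonic mean of `x₂, …, xₙ`.  Then `H/2 ≤ (n-1) μ* ≤ H`. -/
theorem smallest_root_of_derivative_vs_harmonic_mean (n : ℕ) (hn : 2 ≤ n)
    (x : Fin n → ℝ) (hmono : StrictMono x) (hx0 : x ⟨0, by omega⟩ = 0)
    (p : Polynomial ℝ) (hp : p = ∏ i : Fin n, (X - C (x i)))
    (μstar : ℝ)
    (hμ : μstar ∈ (derivative p).roots ∧ ∀ μ ∈ (derivative p).roots, μstar ≤ μ)
    (H : ℝ)
    (hH : H = ((n : ℝ) - 1) / (∑ i ∈ Finset.univ.erase ⟨0, by omega⟩, (x i)⁻¹)) :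
    (1 / 2) * H ≤ ((n : ℝ) - 1) * μstar ∧ ((n : ℝ) - 1) * μstar ≤ H := by
  classical
  set i0 : Fin n := ⟨0, by omega⟩ with hi0
  set i1 : Fin n := ⟨1, by omega⟩ with hi1
  have hi01 : i0 < i1 := by simp [hi0, hi1, Fin.mk_lt_mk]
  have hxpos : ∀ i : Fin n, i ≠ i0 → 0 < x i := by
    intro i hi
    rw [← hx0]
    exact hmono (lt_of_le_of_ne (by simp [hi0, Fin.le_def]) (Ne.symm hi))
  have hx1le : ∀ i : Fin n, i ≠ i0 → x i1 ≤ x i := by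
    intro i hi
    apply hmono.monotone
    rw [Fin.le_def]
    have : i.val ≠ 0 := fun h => hi (Fin.ext h)
    simp [hi1]; omega
  have hx1pos : 0 < x i1 := hxpos i1 (Fin.ne_of_gt hi01)
  -- derivative formula
  have hd : derivative p = ∑ i : Fin n, ∏ j ∈ Finset.univ.erase i, (X - C (x j)) := by
    rw [hp, deriv_finprod]
    simp
  have heval : ∀ t : ℝ, eval t (derivative p)
      = ∑ i : Fin n, ∏ j ∈ Finset.univ.erase i, (t - x j) := by
    intro t
    rw [hd]
    simp [eval_finset_sum, eval_prod]
  have hd0 : derivative p ≠ 0 := (mem_roots'.1 hμ.1).1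
  have hroot : eval μstar (derivative p) = 0 := (mem_roots'.1 hμ.1).2
  -- sign flip lemma
  have hflip : ∀ (t : ℝ) (s : Finset (Fin n)),
      ∏ j ∈ s, (t - x j) = (-1 : ℝ) ^ s.card * ∏ j ∈ s, (x j - t) := by
    intro t s
    rw [← Finset.prod_const, ← Finset.prod_mul_distrib]
    exact Finset.prod_congr rfl fun j _ => by ring
  -- Step A : μstar > 0
  have hμpos : 0 < μstar := by
    by_contra h
    push_neg at h
    have hxnn : ∀ j : Fin n, 0 ≤ x j := by
      intro j
      rcases eq_or_ne j i0 with rfl | hj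
      · rw [hx0]
      · exact (hxpos j hj).le
    have hsumpos : 0 < ∑ i : Fin n, ∏ j ∈ Finset.univ.erase i, (x j - μstar) := by
      apply Finset.sum_pos'
      · intro i _
        exact Finset.prod_nonneg fun j _ => by linarith [hxnn j]
      · refine ⟨i0, Finset.mem_univ i0, Finset.prod_pos fun j hj => ?_⟩
        have := hxpos j (Finset.ne_of_mem_erase hj)
        linarith
    have hcard : ∀ i : Fin n, (Finset.univ.erase i).card = n - 1 := by
      intro i
      rw [Finset.card_erase_of_mem (Finset.mem_univ i), Finset.card_univ, Fintype.card_fin]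
    have : eval μstar (derivative p)
        = (-1 : ℝ) ^ (n - 1) * ∑ i : Fin n, ∏ j ∈ Finset.univ.erase i, (x j - μstar) := by
      rw [heval, Finset.mul_sum]
      exact Finset.sum_congr rfl fun i _ => by rw [hflip, hcard]
    rw [hroot] at this
    have h1 : ((-1 : ℝ) ^ (n - 1)) ≠ 0 := pow_ne_zero _ (by norm_num)
    exact absurd this.symm (mul_ne_zero h1 (ne_of_gt hsumpos))
  -- Step B : μstar < x i1
  have hμlt : μstar < x i1 := by
    have f0 : p.eval 0 = 0 := by
      rw [hp, eval_prod]
      apply Finset.prod_eq_zero (Finset.mem_univ i0)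
      simp [hx0]
    have f1 : p.eval (x i1) = 0 := by
      rw [hp, eval_prod]
      apply Finset.prod_eq_zero (Finset.mem_univ i1)
      simp
    obtain ⟨c, hc, hc'⟩ := exists_deriv_eq_zero hx1pos p.continuousOn (f0.trans f1.symm)
    rw [Polynomial.deriv] at hc'
    have hcmem : c ∈ (derivative p).roots := mem_roots'.2 ⟨hd0, hc'⟩
    exact lt_of_le_of_lt (hμ.2 c hcmem) hc.2
  -- all factors nonzero
  have hgt : ∀ i : Fin n, i ≠ i0 → μstar < x i := fun i hi => lt_of_lt_of_le hμlt (hx1le i hi)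
  have hne : ∀ i : Fin n, μstar - x i ≠ 0 := by
    intro i
    rcases eq_or_ne i i0 with rfl | hi
    · rw [hx0]; simpa using ne_of_gt hμpos
    · have := hgt i hi; intro h; linarith [sub_eq_zero.1 h]
  set P : ℝ := ∏ i : Fin n, (μstar - x i) with hP
  have hPne : P ≠ 0 := Finset.prod_ne_zero_iff.2 fun i _ => hne i
  -- Step C : reciprocal identity
  have hsum0 : ∑ i : Fin n, (μstar - x i)⁻¹ = 0 := by
    have hterm : ∀ i : Fin n, ∏ j ∈ Finset.univ.erase i, (μstar - x j) = P * (μstar - x i)⁻¹ := by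
      intro i
      rw [eq_mul_inv_iff_mul_eq₀ (hne i)]
      exact Finset.prod_erase_mul _ _ (Finset.mem_univ i)
    have h0 : P * ∑ i : Fin n, (μstar - x i)⁻¹ = 0 := by
      rw [Finset.mul_sum, ← hroot, heval]
      exact (Finset.sum_congr rfl fun i _ => (hterm i)).symm
    exact (mul_eq_zero.1 h0).resolve_left hPne
  set E : Finset (Fin n) := Finset.univ.erase i0 with hE
  have hi1E : i1 ∈ E := Finset.mem_erase.2 ⟨Fin.ne_of_gt hi01, Finset.mem_univ _⟩
  have hEmem : ∀ i ∈ E, i ≠ i0 := fun i hi => Finset.ne_of_mem_erase hi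
  have hkey : μstar⁻¹ = ∑ i ∈ E, (x i - μstar)⁻¹ := by
    have := Finset.add_sum_erase Finset.univ (fun i => (μstar - x i)⁻¹) (Finset.mem_univ i0)
    simp only [hsum0, hx0, sub_zero] at this
    have h2 : ∑ i ∈ E, (μstar - x i)⁻¹ = -∑ i ∈ E, (x i - μstar)⁻¹ := by
      rw [← Finset.sum_neg_distrib]
      exact Finset.sum_congr rfl fun i _ => by rw [← inv_neg, neg_sub]
    rw [h2] at this
    linarith [this]
  -- positivity facts
  have hdiffpos : ∀ i ∈ E, 0 < x i - μstar := fun i hi => sub_pos.2 (hgt i (hEmem i hi))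
  have hxposE : ∀ i ∈ E, 0 < x i := fun i hi => hxpos i (hEmem i hi)
  set S : ℝ := ∑ i ∈ E, (x i)⁻¹ with hS
  have hSpos : 0 < S := Finset.sum_pos (fun i hi => inv_pos.2 (hxposE i hi)) ⟨i1, hi1E⟩
  have hn1 : (0:ℝ) ≤ (n:ℝ) - 1 := by
    have : (2:ℝ) ≤ (n:ℝ) := by exact_mod_cast hn
    linarith
  constructor
  · -- lower bound
    have h2μ : 2 * μstar ≤ x i1 := by
      have hsingle : (x i1 - μstar)⁻¹ ≤ ∑ i ∈ E, (x i - μstar)⁻¹ :=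
        Finset.single_le_sum (fun i hi => (inv_pos.2 (hdiffpos i hi)).le) hi1E
      rw [← hkey] at hsingle
      have h1 : 0 < x i1 - μstar := hdiffpos i1 hi1E
      have := (inv_le_inv₀ h1 hμpos).mp hsingle
      linarith
    have hptwise : ∀ i ∈ E, (x i - μstar)⁻¹ ≤ 2 * (x i)⁻¹ := by
      intro i hi
      have hx := hxposE i hi
      have hxx : x i1 ≤ x i := hx1le i (hEmem i hi)
      have hdiv : x i / 2 ≤ x i - μstar := by linarith
      calc (x i - μstar)⁻¹ ≤ (x i / 2)⁻¹ := inv_anti₀ (by linarith) hdiv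
        _ = 2 * (x i)⁻¹ := by rw [inv_div, div_eq_mul_inv]
    have hup : μstar⁻¹ ≤ 2 * S := by
      rw [hkey]
      calc ∑ i ∈ E, (x i - μstar)⁻¹ ≤ ∑ i ∈ E, 2 * (x i)⁻¹ := Finset.sum_le_sum hptwise
        _ = 2 * S := by rw [hS, Finset.mul_sum]
    have hlow : (2 * S)⁻¹ ≤ μstar := by
      have := inv_anti₀ (inv_pos.2 hμpos) hup
      rwa [inv_inv] at this
    have hHeq : (1/2) * H = ((n:ℝ) - 1) * (2 * S)⁻¹ := by
      rw [hH]
      field_simp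
    rw [hHeq]
    exact mul_le_mul_of_nonneg_left hlow hn1
  · -- upper bound
    have hle : S ≤ μstar⁻¹ := by
      rw [hkey]
      apply Finset.sum_le_sum
      intro i hi
      exact inv_anti₀ (hdiffpos i hi) (by linarith [hμpos.le])
    have hμle : μstar ≤ S⁻¹ := by
      have := inv_anti₀ hSpos hle
      rwa [inv_inv] at this
    rw [hH]
    calc ((n:ℝ) - 1) * μstar ≤ ((n:ℝ) - 1) * S⁻¹ := mul_le_mul_of_nonneg_left hμle hn1
      _ = ((n:ℝ) - 1) / S := (div_eq_mul_inv _ _).symm
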